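/- Let (S,C,R) be a binary double-full reaction network, and let {x_n} be a D-type tier sequence. For any reaction y → y' ∈ R with source y in tier 1, the mass-action intensity λ_{y→y'}(x_n) is strictly positive for all sufficiently large n. -/

import Mathlib

open Filter Topology Finset Real
open scoped NNReal
open scoped ENNReal

/-- The monomial `(x ∨ 1)^y = ∏_i max(x_i,1)^{y_i}` for `x, y ∈ Z_{≥0}^d`. -/
noncomputable def monN {d : ℕ} (x : Fin d → ℕ) (y : Fin d → ℕ) : ℝ :=
  ∏ i, ((max (x i) 1 : ℕ) : ℝ) ^ (y i)

/-- `y` belongs to tier 1 along the sequence `x` relative to the complex set `C`. -/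
def Tier1 {d : ℕ} (C : Finset (Fin d → ℕ)) (x : ℕ → Fin d → ℕ) (y : Fin d → ℕ) : Prop :=
  ∀ y' ∈ C, ∃ L : ℝ≥0∞, 0 < L ∧
    Tendsto (fun n => ENNReal.ofReal (monN (x n) y / monN (x n) y')) atTop (𝓝 L)

lemma dichot (f : ℕ → ℕ) (L : ℝ≥0∞) (h : Tendsto (fun n => ((f n : ℕ) : ℝ≥0∞)) atTop (𝓝 L)) :
    Tendsto f atTop atTop ∨ ∃ m, ∀ᶠ n in atTop, f n = m := by
  rcases eq_or_ne L ⊤ with hT | hT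
  · left
    rw [hT, ENNReal.tendsto_nhds_top_iff_nat] at h
    refine tendsto_atTop.2 fun b => (h b).mono fun n hn => ?_
    exact_mod_cast (Nat.cast_lt (α := ℝ≥0∞)).1 hn |>.le
  · right
    have hmem : Set.Icc (L - 1/3) (L + 1/3) ∈ 𝓝 L :=
      ENNReal.Icc_mem_nhds hT (by norm_num)
    have hev : ∀ᶠ n in atTop, ((f n : ℕ) : ℝ≥0∞) ∈ Set.Icc (L - 1/3) (L + 1/3) := h hmem
    obtain ⟨n0, hn0⟩ := hev.exists
    refine ⟨f n0, hev.mono fun n hn => ?_⟩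
    have key : ∀ a b : ℕ, (a : ℝ≥0∞) ∈ Set.Icc (L - 1/3) (L + 1/3) →
        (b : ℝ≥0∞) ∈ Set.Icc (L - 1/3) (L + 1/3) → b ≤ a := by
      intro a b ha hb
      have h1 : L ≤ (a : ℝ≥0∞) + 1/3 := tsub_le_iff_right.1 ha.1
      have h2 : (b : ℝ≥0∞) ≤ (a : ℝ≥0∞) + 1/3 + 1/3 := hb.2.trans (add_le_add_left h1 _)
      have h3 : (b : ℝ≥0∞) < (a : ℝ≥0∞) + 1 := by
        refine h2.trans_lt ?_
        rw [add_assoc]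
        refine ENNReal.add_lt_add_left (by exact_mod_cast ENNReal.natCast_ne_top a) ?_
        rw [show (1:ℝ≥0∞)/3 + 1/3 = 3⁻¹ + 3⁻¹ by rw [one_div]]
        rw [← ENNReal.coe_ofNat, ← ENNReal.coe_inv (by norm_num), ← ENNReal.coe_add,
          ← ENNReal.coe_one, ENNReal.coe_lt_coe, ← NNReal.coe_lt_coe]
        push_cast
        norm_num
      have : (b : ℝ≥0∞) < ((a + 1 : ℕ) : ℝ≥0∞) := by push_cast; exact h3
      exact Nat.lt_succ_iff.1 (Nat.cast_lt.1 this)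
    exact le_antisymm (key _ _ hn0 hn) (key _ _ hn hn0)

lemma monN_pos {d : ℕ} (x y : Fin d → ℕ) : 0 < monN x y := by
  refine Finset.prod_pos fun i _ => pow_pos ?_ _
  exact_mod_cast Nat.lt_of_lt_of_le Nat.zero_lt_one (le_max_right _ _)

lemma monN_double {d : ℕ} (x : Fin d → ℕ) (i : Fin d) :
    monN x (fun j => if j = i then 2 else 0) = ((max (x i) 1 : ℕ) : ℝ) ^ 2 := by
  unfold monN
  rw [Finset.prod_eq_single i]
  · simp
  · intro j _ hj; simp [hj]
  · simp

lemma tier_contra {d : ℕ} {C : Finset (Fin d → ℕ)} {x : ℕ → Fin d → ℕ} {y y' : Fin d → ℕ}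
    (htier : Tier1 C x y) (hy' : y' ∈ C)
    (h0 : Tendsto (fun n => monN (x n) y / monN (x n) y') atTop (𝓝 0)) : False := by
  obtain ⟨L, hL, hT⟩ := htier y' hy'
  have : Tendsto (fun n => ENNReal.ofReal (monN (x n) y / monN (x n) y')) atTop (𝓝 0) := by
    have := (ENNReal.continuous_ofReal.tendsto 0).comp h0
    simpa [Function.comp_def] using this
  exact absurd (tendsto_nhds_unique hT this) hL.ne'

-- support structure of a binary complex with two positive coordinates
lemma support_pair {d : ℕ} (y : Fin d → ℕ) (h : ∑ j, y j ≤ 2) (i k : Fin d) (hik : i ≠ k)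
    (hi : 1 ≤ y i) (hk : 1 ≤ y k) :
    y i = 1 ∧ y k = 1 ∧ ∀ t, t ≠ i → t ≠ k → y t = 0 := by
  have hpair : ∀ s : Finset (Fin d), ∑ j ∈ s, y j ≤ 2 := fun s =>
    le_trans (Finset.sum_le_sum_of_subset (Finset.subset_univ s)) h
  have h2 : y i + y k ≤ 2 := by
    have := hpair {i, k}
    rwa [Finset.sum_pair hik] at this
  refine ⟨by omega, by omega, fun t hti htk => ?_⟩
  have := hpair {t, i, k}
  rw [Finset.sum_insert (by simp [hti, htk]), Finset.sum_pair hik] at this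
  omega

/-- part (i) of Lemma 8 of the paper: for a binary double-full network
and a D-type tier sequence, any reaction whose source complex `y` is in tier 1 has
strictly positive mass-action intensity along the sequence for all large `n`. -/
theorem tier_one_source_intensity_pos (d : ℕ) (hd : 1 ≤ d) (C : Finset (Fin d → ℕ))
    (hbinary : ∀ y ∈ C, ∑ j, y j ≤ 2)
    (hfull : ∀ i : Fin d, (fun j => if j = i then 2 else 0 : Fin d → ℕ) ∈ C)
    (x : ℕ → Fin d → ℕ)
    (hLim : ∀ j, ∃ L : ℝ≥0∞, Tendsto (fun n => ((x n j : ℕ) : ℝ≥0∞)) atTop (𝓝 L))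
    (hinf : ∃ j, Tendsto (fun n => x n j) atTop atTop)
    (hRatio : ∀ y ∈ C, ∀ y' ∈ C, ∃ L : ℝ≥0∞,
      Tendsto (fun n => ENNReal.ofReal (monN (x n) y / monN (x n) y')) atTop (𝓝 L))
    (y y' : Fin d → ℕ) (hy : y ∈ C) (hy' : y' ∈ C)
    (htier : Tier1 C x y)
    (κ : ℝ) (hκ : 0 < κ) :
    ∀ᶠ n in atTop, 0 < κ * ∏ j, ((x n j).descFactorial (y j) : ℝ) := by
  classical
  have dich : ∀ k, Tendsto (fun n => x n k) atTop atTop ∨ ∃ m, ∀ᶠ n in atTop, x n k = m :=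
    fun k => by obtain ⟨L, hL⟩ := hLim k; exact dichot _ L hL
  have key : ∀ i, ∀ᶠ n in atTop, y i ≤ x n i := by
    intro i
    rcases Nat.eq_zero_or_pos (y i) with hyi | hyi
    · simp [hyi]
    rcases dich i with hi | ⟨m, hm⟩
    · exact hi.eventually_ge_atTop (y i)
    rcases le_or_gt (y i) m with hle | hlt
    · exact hm.mono fun n hn => hn ▸ hle
    -- contradiction branch: x n i eventually = m < y i
    exfalso
    by_cases hex : ∃ k, k ≠ i ∧ 1 ≤ y k ∧ Tendsto (fun n => x n k) atTop atTop
    · obtain ⟨k, hki, hyk, hk⟩ := hex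
      obtain ⟨hyi1, hyk1, hrest⟩ := support_pair y (hbinary y hy) i k (Ne.symm hki) hyi hyk
      -- monN (x n) y = max(x n i,1) * max(x n k,1)
      have hmon : ∀ n, monN (x n) y =
          ((max (x n i) 1 : ℕ) : ℝ) * ((max (x n k) 1 : ℕ) : ℝ) := by
        intro n
        unfold monN
        rw [← Finset.prod_subset (Finset.subset_univ ({i, k} : Finset (Fin d)))
          (fun t _ ht => by
            rcases Decidable.em (t = i) with h | h
            · exact absurd (by simp [h]) ht
            rcases Decidable.em (t = k) with h' | h'
            · exact absurd (by simp [h']) ht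
            rw [hrest t h h', pow_zero])]
        rw [Finset.prod_pair (Ne.symm hki), hyi1, hyk1, pow_one, pow_one]
      -- ratio with 2 e_k tends to 0
      refine tier_contra htier (hfull k) ?_
      have hak : Tendsto (fun n => ((max (x n k) 1 : ℕ) : ℝ)) atTop atTop :=
        tendsto_natCast_atTop_atTop.comp
          (tendsto_atTop.2 fun b => (hk.eventually_ge_atTop b).mono fun n hn =>
            le_trans hn (le_max_left _ _))
      have hq : Tendsto (fun n => ((max m 1 : ℕ) : ℝ) / ((max (x n k) 1 : ℕ) : ℝ))
          atTop (𝓝 0) := Tendsto.div_atTop tendsto_const_nhds hak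
      refine hq.congr' ?_
      filter_upwards [hm] with n hn
      rw [hmon n, monN_double, hn]
      have hne : ((max (x n k) 1 : ℕ) : ℝ) ≠ 0 := by positivity
      field_simp
    · push_neg at hex
      -- all supported coordinates are eventually constant
      have hconst : ∀ k, ∃ mk, 1 ≤ y k → ∀ᶠ n in atTop, x n k = mk := by
        intro k
        rcases Decidable.em (1 ≤ y k) with hyk | hyk
        · rcases dich k with hk | ⟨mk, hmk⟩
          · rcases Decidable.em (k = i) with rfl | hki
            · obtain ⟨n, hn1, hn2⟩ := ((hk.eventually_ge_atTop (m+1)).and hm).exists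
              omega
            · exact absurd hk (hex k hki hyk)
          · exact ⟨mk, fun _ => hmk⟩
        · exact ⟨0, fun h => absurd h hyk⟩
      choose M hM using hconst
      have hev : ∀ᶠ n in atTop, ∀ k, 1 ≤ y k → x n k = M k := by
        refine eventually_all.2 fun k => ?_
        rcases Decidable.em (1 ≤ y k) with hyk | hyk
        · exact (hM k hyk).mono fun n hn _ => hn
        · exact Eventually.of_forall fun n h => absurd h hyk
      obtain ⟨j, hj⟩ := hinf
      refine tier_contra htier (hfull j) ?_
      have haj : Tendsto (fun n => ((max (x n j) 1 : ℕ) : ℝ) ^ 2) atTop atTop := by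
        exact (tendsto_pow_atTop (two_ne_zero)).comp
          (tendsto_natCast_atTop_atTop.comp
            (tendsto_atTop.2 fun b => (hj.eventually_ge_atTop b).mono fun n hn =>
              le_trans hn (le_max_left _ _)))
      have hq : Tendsto (fun n => monN M y / ((max (x n j) 1 : ℕ) : ℝ) ^ 2) atTop (𝓝 0) :=
        Tendsto.div_atTop tendsto_const_nhds haj
      refine hq.congr' ?_
      filter_upwards [hev] with n hn
      rw [monN_double]
      congr 1
      unfold monN
      refine Finset.prod_congr rfl fun k _ => ?_
      rcases Nat.eq_zero_or_pos (y k) with h0 | h1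
      · simp [h0]
      · rw [hn k h1]
  have hall : ∀ᶠ n in atTop, ∀ i, y i ≤ x n i := eventually_all.2 key
  filter_upwards [hall] with n hn
  refine mul_pos hκ (Finset.prod_pos fun i _ => ?_)
  have : 0 < (x n i).descFactorial (y i) := by
    rcases Nat.eq_zero_or_pos ((x n i).descFactorial (y i)) with h | h
    · exact absurd (Nat.descFactorial_eq_zero_iff_lt.1 h) (not_lt.2 (hn i))
    · exact h
  exact_mod_cast this
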